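/- arXiv:2311.04035 — 5 statements merged into one kernel-verified Lean document; each statement's English description precedes it below -/
import Mathlib

section
/- Let X be a partially observed matrix, and consider the graph G on the set of columns (rating providers) with an edge between two columns whenever there exists a row observed by both. If C is a connected component of G and O(C) is the set of rows observed by at least one column in C, then every entry of the submatrix indexed by O(C) × C is either observed or estimatable. -/
/-- `EstimUpTo Obs v i j`: entry `(i,j)` is observed or level-`u` estimatable
for some `u ≤ v`.  In particular `∃ v, EstimUpTo Obs v i j` means the entry is
observed or estimatable. -/
def EstimUpTo {I J : Type*} (Obs : I → J → Prop) : ℕ → I → J → Prop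
  | 0 => Obs
  | v + 1 => fun i j => EstimUpTo Obs v i j ∨
      (¬ Obs i j ∧ ∃ i' j', i' ≠ i ∧ j' ≠ j ∧
        EstimUpTo Obs v i' j ∧ EstimUpTo Obs v i j' ∧ EstimUpTo Obs v i' j')

/-- The column graph: nodes are columns, with an edge between two distinct
columns iff some row is observed by both. -/
def colGraph {I J : Type*} (Obs : I → J → Prop) : SimpleGraph J where
  Adj j j' := j ≠ j' ∧ ∃ i, Obs i j ∧ Obs i j'
  symm := by
    constructor
    rintro j j' ⟨h, i, h1, h2⟩
    exact ⟨h.symm, i, h2, h1⟩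
  loopless := by
    constructor
    rintro j ⟨h, -⟩
    exact h rfl

lemma EstimUpTo.mono {I J : Type*} {Obs : I → J → Prop} {v w : ℕ} (h : v ≤ w)
    {i : I} {j : J} (he : EstimUpTo Obs v i j) : EstimUpTo Obs w i j := by
  induction w with
  | zero => simpa [Nat.le_zero.mp h] using he
  | succ w ih =>
      rcases Nat.lt_or_ge v (w+1) with hl | hg
      · exact Or.inl (ih (Nat.lt_succ_iff.mp hl))
      · have : v = w + 1 := le_antisymm h hg
        subst this; exact he

lemma estim_step {I J : Type*} {Obs : I → J → Prop} {i : I} {j j' : J}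
    (hadj : (colGraph Obs).Adj j j') {v : ℕ} (he : EstimUpTo Obs v i j) :
    ∃ w, EstimUpTo Obs w i j' := by
  obtain ⟨hne, i'', h1, h2⟩ := hadj
  by_cases hobs : Obs i j'
  · exact ⟨0, hobs⟩
  · by_cases hii : i'' = i
    · exact absurd (hii ▸ h2) hobs
    · refine ⟨v + 1, Or.inr ⟨hobs, i'', j, hii, hne, ?_, he, ?_⟩⟩
      · exact EstimUpTo.mono (Nat.zero_le v) h2
      · exact EstimUpTo.mono (Nat.zero_le v) h1

lemma estim_walk {I J : Type*} {Obs : I → J → Prop} {i : I} {j j' : J}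
    (p : (colGraph Obs).Walk j j') (he : ∃ v, EstimUpTo Obs v i j) :
    ∃ w, EstimUpTo Obs w i j' := by
  induction p with
  | nil => exact he
  | cons h _ ih =>
      obtain ⟨v, hv⟩ := he
      exact ih (estim_step h hv)

/-- If `C` is a connected component of the column graph and `O(C)` is the set
of rows observed by at least one column in `C`, then every entry of the
submatrix `O(C) × C` is observed or estimatable. -/
theorem stmt2 {m n : ℕ} (Obs : Fin m → Fin n → Prop)
    (hrow : ∀ i, ∃ j, Obs i j)
    (C : (colGraph Obs).ConnectedComponent)
    (OC : Set (Fin m))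
    (hOC : OC = {i | ∃ j, (colGraph Obs).connectedComponentMk j = C ∧ Obs i j}) :
    ∀ i ∈ OC, ∀ j, (colGraph Obs).connectedComponentMk j = C →
      ∃ v, EstimUpTo Obs v i j := by
  intro i hi j hj
  rw [hOC] at hi
  obtain ⟨j0, hj0C, hobs⟩ := hi
  have hreach : (colGraph Obs).Reachable j0 j :=
    SimpleGraph.ConnectedComponent.exact (hj0C.trans hj.symm)
  obtain ⟨p⟩ := hreach
  exact estim_walk p ⟨0, hobs⟩
end

section
/- A partially observed matrix X in which every row has at least one observed entry is estimatable (i.e., every entry is observed or estimatable) if and only if its column graph representation—nodes are columns, with an edge between two columns iff some row is observed by both—is connected. -/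
lemma reach_of_estim {m n : ℕ} (Obs : Fin m → Fin n → Prop) (hrow : ∀ i, ∃ j, Obs i j) :
    ∀ v (i : Fin m) (j : Fin n), EstimUpTo Obs v i j →
      ∀ j0, Obs i j0 → (colGraph Obs).Reachable j0 j := by
  intro v
  induction v with
  | zero =>
    intro i j h j0 h0
    by_cases hj : j0 = j
    · subst hj; exact SimpleGraph.Reachable.refl j0
    · exact SimpleGraph.Adj.reachable ⟨hj, i, h0, h⟩
  | succ v ih =>
    intro i j h j0 h0
    rcases h with h | ⟨-, i', j', _, _, h1, h2, h3⟩
    · exact ih i j h j0 h0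
    · obtain ⟨j1, hj1⟩ := hrow i'
      exact (ih i j' h2 j0 h0).trans ((ih i' j' h3 j1 hj1).symm.trans (ih i' j h1 j1 hj1))

lemma estim_of_walk {m n : ℕ} (Obs : Fin m → Fin n → Prop) :
    ∀ {j j0 : Fin n}, (colGraph Obs).Walk j j0 → ∀ i : Fin m, Obs i j0 →
      ∃ v, EstimUpTo Obs v i j := by
  intro j j0 p
  induction p with
  | nil => exact fun i h => ⟨0, h⟩
  | @cons a b c hab _ ih =>
    intro i h
    obtain ⟨v, hv⟩ := ih i h
    obtain ⟨hne, i', h1, h2⟩ := hab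
    by_cases hoa : Obs i a
    · exact ⟨0, hoa⟩
    · by_cases hii : i' = i
      · exact absurd (hii ▸ h1) hoa
      · exact ⟨v + 1, Or.inr ⟨hoa, i', b, hii, hne.symm,
          EstimUpTo.mono (Nat.zero_le v) h1, hv, EstimUpTo.mono (Nat.zero_le v) h2⟩⟩

/-- A partially observed matrix in which every row has at least one observed
entry is estimatable (every entry is observed or estimatable) iff its column
graph is connected. -/
theorem stmt3 {m n : ℕ} (hm : 0 < m) (hn : 0 < n)
    (Obs : Fin m → Fin n → Prop) (hrow : ∀ i, ∃ j, Obs i j) :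
    (∀ i j, ∃ v, EstimUpTo Obs v i j) ↔ (colGraph Obs).Connected := by
  constructor
  · intro h
    haveI : Nonempty (Fin n) := ⟨⟨0, hn⟩⟩
    refine ⟨fun j j' => ?_⟩
    obtain ⟨j0, h0⟩ := hrow ⟨0, hm⟩
    obtain ⟨v, hv⟩ := h ⟨0, hm⟩ j
    obtain ⟨v', hv'⟩ := h ⟨0, hm⟩ j'
    exact (reach_of_estim Obs hrow v _ j hv j0 h0).symm.trans
      (reach_of_estim Obs hrow v' _ j' hv' j0 h0)
  · intro hc i j
    obtain ⟨j0, h0⟩ := hrow i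
    obtain ⟨p⟩ := hc.preconnected j j0
    exact estim_of_walk Obs p i h0
end

section
/- Let X be a partially observed matrix with row set I and column set J, let I_j be the set of rows observed in column j, and for each j' ∈ J let N_{j'} = { j ∈ J : I_j ∩ I_{j'} ≠ ∅ }. Then every unobserved entry of X is level-1 estimatable if and only if I = ⋃_{j ∈ N_{j'}} I_j for all j' ∈ J. -/
/-- Every unobserved entry of `X` is level-1 estimatable iff
`I = ⋃_{j ∈ N_{j'}} I_j` for all columns `j'`, where `I_j` is the set of rows
observed in column `j` and `N_{j'} = {j : I_j ∩ I_{j'} ≠ ∅}`. -/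
theorem stmt4 {I J : Type*} (Obs : I → J → Prop)
    (Iset : J → Set I) (hI : ∀ j, Iset j = {i | Obs i j})
    (N : J → Set J) (hN : ∀ j', N j' = {j | (Iset j ∩ Iset j').Nonempty}) :
    (∀ i' j', ¬ Obs i' j' → ∃ i'' j'', i'' ≠ i' ∧ j'' ≠ j' ∧
        Obs i'' j' ∧ Obs i' j'' ∧ Obs i'' j'') ↔
      (∀ j' : J, (Set.univ : Set I) = ⋃ j ∈ N j', Iset j) := by
  simp only [hI, hN]
  constructor
  · intro h j'
    ext i
    simp only [Set.mem_univ, Set.mem_iUnion, Set.mem_setOf_eq, true_iff]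
    by_cases hobs : Obs i j'
    · exact ⟨j', ⟨i, hobs, hobs⟩, hobs⟩
    · obtain ⟨i'', j'', _, _, h1, h2, h3⟩ := h i j' hobs
      exact ⟨j'', ⟨i'', h3, h1⟩, h2⟩
  · intro h i' j' hobs
    have := h j'
    have hi : i' ∈ (Set.univ : Set I) := trivial
    rw [this] at hi
    simp only [Set.mem_iUnion, Set.mem_setOf_eq] at hi
    obtain ⟨j'', ⟨i'', h1, h2⟩, h3⟩ := hi
    exact ⟨i'', j'', fun e => hobs (e ▸ h2), fun e => hobs (e ▸ h3), h2, h3, h1⟩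
end

section
/- Let G be the column graph of a partially observed matrix (edge between columns iff they share an observed row), and suppose G is disconnected with connected components C_1,...,C_r (r ≥ 2), each row observed by at least one column. Then the observed-row sets O(C_1),...,O(C_r) partition the set of all rows, and no entry (i,j) with i ∉ O(C) for the component C containing j is estimatable. -/
/-- If the column graph is disconnected and every row is observed by some
column, then the observed-row sets of the connected components partition the
set of rows, and no entry `(i,j)` with `i` outside the observed-row set of the
component of `j` is estimatable. -/
theorem stmt16 {m n : ℕ} (hn : 0 < n) (Obs : Fin m → Fin n → Prop)
    (hrow : ∀ i, ∃ j, Obs i j)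
    (hdis : ¬ (colGraph Obs).Connected)
    (O : (colGraph Obs).ConnectedComponent → Set (Fin m))
    (hO : ∀ C, O C = {i | ∃ j, (colGraph Obs).connectedComponentMk j = C ∧ Obs i j}) :
    (∀ i : Fin m, ∃! C : (colGraph Obs).ConnectedComponent, i ∈ O C) ∧
      ∀ i j, i ∉ O ((colGraph Obs).connectedComponentMk j) →
        ¬ ∃ v, EstimUpTo Obs v i j := by
  have key : ∀ (i : Fin m) (j j' : Fin n), Obs i j → Obs i j' →
      (colGraph Obs).connectedComponentMk j = (colGraph Obs).connectedComponentMk j' := by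
    intro i j j' h1 h2
    by_cases hjj : j = j'
    · rw [hjj]
    · exact SimpleGraph.ConnectedComponent.sound
        (SimpleGraph.Adj.reachable ⟨hjj, i, h1, h2⟩)
  have mem : ∀ i j, Obs i j → i ∈ O ((colGraph Obs).connectedComponentMk j) := by
    intro i j h; rw [hO]; exact ⟨j, rfl, h⟩
  have est : ∀ v i j, EstimUpTo Obs v i j →
      i ∈ O ((colGraph Obs).connectedComponentMk j) := by
    intro v
    induction v with
    | zero => intro i j h; exact mem i j h
    | succ v ih =>
      intro i j h
      rcases h with h | ⟨-, i', j', hi', hj', h1, h2, h3⟩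
      · exact ih i j h
      · have e1 := ih i' j h1
        have e2 := ih i j' h2
        have e3 := ih i' j' h3
        rw [hO] at e1 e3
        obtain ⟨j1, hj1, ho1⟩ := e1
        obtain ⟨j2, hj2, ho2⟩ := e3
        have heq : (colGraph Obs).connectedComponentMk j
            = (colGraph Obs).connectedComponentMk j' := by
          rw [← hj1, ← hj2]; exact key i' j1 j2 ho1 ho2
        rw [heq]; exact e2
  constructor
  · intro i
    obtain ⟨j, hj⟩ := hrow i
    refine ⟨(colGraph Obs).connectedComponentMk j, mem i j hj, ?_⟩
    intro C hC
    rw [hO] at hC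
    obtain ⟨j', hj', ho⟩ := hC
    rw [← hj']
    exact key i j' j ho hj
  · intro i j hnot h
    obtain ⟨v, hv⟩ := h
    exact hnot (est v i j hv)
end

section
/- In the column graph of a partially observed matrix, if columns j and j' are connected by an edge (i.e., share an observed row), then the sets of estimatable-or-observed rows of j and j' coincide: E(j) = E(j'). -/
lemma obs_estimUpTo {I J : Type*} (Obs : I → J → Prop) (v : ℕ) {i : I} {j : J}
    (h : Obs i j) : EstimUpTo Obs v i j := by
  induction v with
  | zero => exact h
  | succ v ih => exact Or.inl ih

lemma estim_transfer {I J : Type*} (Obs : I → J → Prop) {j j' : J} (hne : j ≠ j')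
    {i₀ : I} (h₀ : Obs i₀ j) (h₀' : Obs i₀ j') {i : I} {v : ℕ}
    (h : EstimUpTo Obs v i j) : ∃ w, EstimUpTo Obs w i j' := by
  by_cases hobs : Obs i j'
  · exact ⟨0, hobs⟩
  · refine ⟨v + 1, Or.inr ⟨hobs, i₀, j, ?_, hne, obs_estimUpTo Obs v h₀', h,
      obs_estimUpTo Obs v h₀⟩⟩
    rintro rfl
    exact hobs h₀'

/-- If columns `j` and `j'` share an observed row (i.e., are adjacent in the
column graph), then their sets of estimatable-or-observed rows coincide:
`E(j) = E(j')`. -/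
theorem stmt17 {I J : Type*} (Obs : I → J → Prop) (j j' : J) (hne : j ≠ j')
    (hshare : ∃ i₀, Obs i₀ j ∧ Obs i₀ j') :
    {i | ∃ v, EstimUpTo Obs v i j} = {i | ∃ v, EstimUpTo Obs v i j'} := by
  obtain ⟨i₀, h₀, h₀'⟩ := hshare
  ext i
  constructor
  · rintro ⟨v, h⟩
    exact estim_transfer Obs hne h₀ h₀' h
  · rintro ⟨v, h⟩
    exact estim_transfer Obs hne.symm h₀' h₀ h
end
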